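/- For every λ ≥ 1 there exists δ > 0 such that for all r > 0 and all x, y ∈ ℝ^d with r ≤ ‖x−y‖ ≤ λr, there exists a point z on the segment [x,y] such that the open ball B(z, δr) is contained in W(x,y,r) = {z ∈ B(y, ‖y−x‖) : B(z,r) ⊇ B(x,r) ∩ B(y, ‖y−x‖)}. -/

import Mathlib

open Metric

/-- `W(x,y,r)`: the set of points `z` of the open ball `B(y, ‖y-x‖)` such that
`B(z,r) ⊇ B(x,r) ∩ B(y, ‖y-x‖)`. -/
def W {d : ℕ} (x y : EuclideanSpace ℝ (Fin d)) (r : ℝ) : Set (EuclideanSpace ℝ (Fin d)) :=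
  {z | z ∈ ball y (dist y x) ∧ ball x r ∩ ball y (dist y x) ⊆ ball z r}


private lemma arith_aux (lam r D a b δ : ℝ) (hlam : 1 ≤ lam) (hr : 0 < r) (h1 : r ≤ D)
    (h2 : D ≤ lam*r) (ha0 : 0 ≤ a) (ha : a < r) (hb0 : 0 ≤ b) (hb : b < D)
    (hδ : δ = 1/(8*lam^2)) :
    (1-(4*δ))*a^2 + (4*δ)*b^2 - ((4*δ)-(4*δ)^2)*D^2 < ((1-δ)*r)^2 := by
  have hlam2 : (0:ℝ) < lam^2 := by positivity
  have hδl : δ * lam^2 = 1/8 := by rw [hδ]; field_simp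
  have hδ0 : 0 < δ := by rw [hδ]; positivity
  have hδ1 : δ ≤ 1/8 := by nlinarith
  set t : ℝ := 4*δ with ht
  have ht0 : 0 < t := by positivity
  have ht1 : t ≤ 1/2 := by rw [ht]; linarith
  have htl : t * lam^2 = 1/2 := by rw [ht]; linarith [hδl]
  have hrD : 0 < D := lt_of_lt_of_le hr h1
  have ha2 : a^2 ≤ r^2 := by nlinarith
  have hb2 : b^2 < D^2 := by nlinarith
  have hD2 : D^2 ≤ lam^2 * r^2 := by nlinarith
  have ht2 : (0:ℝ) ≤ 1 - t := by linarith
  have q2 : t^2 * lam^2 = t/2 := by linear_combination t * htl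
  have q3 : t^2 * (lam^2 * r^2) = t/2 * r^2 := by linear_combination r^2 * q2
  have q4 : t * r^2 = 4 * (δ * r^2) := by linear_combination r^2 * ht
  have e5 : ((1-δ)*r)^2 = r^2 - 2*(δ*r^2) + (δ*r)^2 := by ring
  rw [e5]
  nlinarith [mul_le_mul_of_nonneg_left ha2 ht2, mul_lt_mul_of_pos_left hb2 ht0,
    mul_le_mul_of_nonneg_left hD2 (sq_nonneg t), sq_nonneg (δ*r), q3, q4]

theorem stmt_3 (d : ℕ) (lam : ℝ) (hlam : 1 ≤ lam) :
    ∃ δ > (0 : ℝ), ∀ r > (0 : ℝ), ∀ x y : EuclideanSpace ℝ (Fin d),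
      r ≤ dist x y → dist x y ≤ lam * r →
      ∃ z ∈ segment ℝ x y, ball z (δ * r) ⊆ W x y r := by
  have hlam2 : (0:ℝ) < lam^2 := by positivity
  refine ⟨1/(8*lam^2), by positivity, ?_⟩
  intro r hr x y h1 h2
  set δ : ℝ := 1/(8*lam^2) with hδ
  set t : ℝ := 4*δ with ht
  have hδ0 : 0 < δ := by positivity
  have ht0 : 0 < t := by positivity
  have hδl : δ * lam^2 = 1/8 := by rw [hδ]; field_simp
  have htl : t * lam^2 = 1/2 := by rw [ht]; linarith [hδl]
  have ht1 : t ≤ 1/2 := by nlinarith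
  have hδt : δ ≤ t := by nlinarith
  have hδ1 : δ ≤ 1/8 := by nlinarith
  set D := dist x y with hD
  have hD' : dist y x = D := dist_comm y x
  have hrD : 0 < D := lt_of_lt_of_le hr h1
  have hDnorm : D = ‖y - x‖ := by rw [hD, dist_eq_norm, norm_sub_rev]
  refine ⟨x + t • (y - x), ⟨1 - t, t, by linarith, le_of_lt ht0, by ring, by module⟩, ?_⟩
  intro z' hz'
  rw [mem_ball] at hz'
  have hzy : dist (x + t • (y - x)) y = (1 - t) * D := by
    have e : x + t • (y - x) - y = -((1-t) • (y - x)) := by module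
    rw [dist_eq_norm, e, norm_neg, norm_smul, Real.norm_eq_abs,
      abs_of_nonneg (by linarith), hDnorm]
  constructor
  · rw [mem_ball, hD']
    have hδrD : δ * r ≤ t * D := by nlinarith
    calc dist z' y ≤ dist z' (x + t • (y - x)) + dist (x + t • (y - x)) y :=
          dist_triangle _ _ _
      _ < δ * r + (1 - t) * D := by rw [hzy]; linarith
      _ ≤ t * D + (1 - t) * D := by linarith
      _ = D := by ring
  · intro w hw
    obtain ⟨hw1, hw2⟩ := hw
    rw [mem_ball] at hw1 hw2 ⊢
    rw [hD'] at hw2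
    have key : (dist w (x + t • (y - x)))^2 < ((1 - δ) * r)^2 := by
      have e2 : dist w (x + t • (y - x)) = ‖(w - x) - t • (y - x)‖ := by
        rw [dist_eq_norm]; congr 1; module
      have e3 : ‖(w - x) - t • (y - x)‖^2
          = ‖w - x‖^2 - 2 * t * (inner ℝ (w-x) (y-x) : ℝ) + t^2 * ‖y - x‖^2 := by
        rw [norm_sub_sq_real, real_inner_smul_right, norm_smul, Real.norm_eq_abs,
          abs_of_pos ht0, mul_pow]
        ring
      have e4 : ‖w - y‖^2
          = ‖w - x‖^2 - 2 * (inner ℝ (w-x) (y-x) : ℝ) + ‖y - x‖^2 := by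
        have e : w - y = (w - x) - (y - x) := by module
        rw [e, norm_sub_sq_real]
      have ha : ‖w - x‖ < r := by rwa [← dist_eq_norm]
      have hb : ‖w - y‖ < D := by rwa [← dist_eq_norm]
      have ha0 : 0 ≤ ‖w - x‖ := norm_nonneg _
      have hb0 : 0 ≤ ‖w - y‖ := norm_nonneg _
      have hkey : (dist w (x + t • (y - x)))^2
          = (1 - t) * ‖w - x‖^2 + t * ‖w - y‖^2 - (t - t^2) * D^2 := by
        rw [e2, e3, e4, hDnorm]; ring
      rw [hkey, ht]
      exact arith_aux lam r D ‖w - x‖ ‖w - y‖ δ hlam hr h1 h2 ha0 ha hb0 hb hδ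
    have hdz : dist w (x + t • (y - x)) < (1 - δ) * r := by
      have h1δ : 0 ≤ (1 - δ) * r := by nlinarith
      exact lt_of_pow_lt_pow_left₀ 2 h1δ key
    calc dist w z' ≤ dist w (x + t • (y - x)) + dist (x + t • (y - x)) z' := dist_triangle _ _ _
      _ < (1 - δ) * r + δ * r := by rw [dist_comm (x + t • (y - x)) z']; linarith
      _ = r := by ring
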